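/- arXiv:2304.08538 — 4 statements merged into one kernel-verified Lean document; each statement's English description precedes it below -/
import Mathlib

section
/- Let A ∈ ℝⁿˣⁿ be a Hurwitz matrix (all eigenvalues have negative real part), and let P be the symmetric positive definite solution of the Lyapunov equation PA + AᵀP = −I. Then for all t ≥ 0, ‖exp(At)‖ ≤ √(‖P⁻¹‖·‖P‖) · exp(−t/(2‖P‖)), where ‖·‖ denotes the operator (spectral) norm. -/
open Matrix
open scoped Matrix.Norms.L2Operator

section Aux

variable {n : ℕ}

open scoped MatrixOrder

private lemma dot_inner_aux (a b : Fin n → ℝ) :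
    a ⬝ᵥ b = (inner ℝ ((WithLp.equiv 2 (Fin n → ℝ)).symm a)
      ((WithLp.equiv 2 (Fin n → ℝ)).symm b) : ℝ) := by
  simp [PiLp.inner_apply, dotProduct, WithLp.equiv_symm_apply, mul_comm]

private lemma norm_sq_aux (a : Fin n → ℝ) :
    ‖(WithLp.equiv 2 (Fin n → ℝ)).symm a‖ ^ 2 = a ⬝ᵥ a := by
  rw [dot_inner_aux, real_inner_self_eq_norm_sq]

/-- Upper quadratic-form bound: `vᵀ P v ≤ ‖P‖ ‖v‖²`. -/
private lemma quad_le_aux (P : Matrix (Fin n) (Fin n) ℝ) (v : Fin n → ℝ) :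
    v ⬝ᵥ (P *ᵥ v) ≤ ‖P‖ * (v ⬝ᵥ v) := by
  set e := (WithLp.equiv 2 (Fin n → ℝ)).symm with he
  have h1 : v ⬝ᵥ (P *ᵥ v) = (inner ℝ (e v) (e (P *ᵥ v)) : ℝ) := dot_inner_aux _ _
  calc v ⬝ᵥ (P *ᵥ v) ≤ ‖e v‖ * ‖e (P *ᵥ v)‖ := h1 ▸ real_inner_le_norm _ _
  _ ≤ ‖e v‖ * (‖P‖ * ‖e v‖) := by
      have := P.l2_opNorm_mulVec (e v)
      exact mul_le_mul_of_nonneg_left this (norm_nonneg _)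
  _ = ‖P‖ * (v ⬝ᵥ v) := by rw [← norm_sq_aux v]; ring

/-- Lower quadratic-form bound: `‖v‖² ≤ ‖P⁻¹‖ vᵀ P v` for `P` positive definite. -/
private lemma le_quad_aux (P : Matrix (Fin n) (Fin n) ℝ) (hPpd : P.PosDef) (v : Fin n → ℝ) :
    v ⬝ᵥ v ≤ ‖P⁻¹‖ * (v ⬝ᵥ (P *ᵥ v)) := by
  classical
  set e := (WithLp.equiv 2 (Fin n → ℝ)).symm with he
  set S := CFC.sqrt P with hS
  have hSS : S * S = P := CFC.sqrt_mul_sqrt_self P hPpd.posSemidef.nonneg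
  have hSherm : S.IsHermitian := (CFC.sqrt_nonneg P).posSemidef.1
  have hT : Sᵀ = S := by simpa [conjTranspose_eq_transpose_of_trivial] using hSherm.eq
  have hSdet : IsUnit S.det := by
    have h0 : S.det * S.det = P.det := by rw [← det_mul, hSS]
    have hP := hPpd.det_pos
    refine isUnit_iff_ne_zero.mpr fun h => ?_
    rw [h, mul_zero] at h0
    exact hP.ne' h0.symm
  have hinv : S⁻¹ * S = 1 := nonsing_inv_mul S hSdet
  have hSinvH : (S⁻¹)ᴴ = S⁻¹ := by rw [conjTranspose_nonsing_inv, hSherm.eq]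
  have hPinv : P⁻¹ = S⁻¹ * S⁻¹ := by rw [← hSS, Matrix.mul_inv_rev]
  have hnormSinv : ‖S⁻¹‖ * ‖S⁻¹‖ = ‖P⁻¹‖ := by
    rw [hPinv, ← Matrix.l2_opNorm_conjTranspose_mul_self (S⁻¹), hSinvH]
  have h1 : v = S⁻¹ *ᵥ (S *ᵥ v) := by rw [mulVec_mulVec, hinv, one_mulVec]
  have h2 : ‖e v‖ ≤ ‖S⁻¹‖ * ‖e (S *ᵥ v)‖ := by
    calc ‖e v‖ = ‖e (S⁻¹ *ᵥ (S *ᵥ v))‖ := by rw [← h1]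
    _ ≤ ‖S⁻¹‖ * ‖e (S *ᵥ v)‖ := (S⁻¹).l2_opNorm_mulVec (e (S *ᵥ v))
  have h3 : v ⬝ᵥ (P *ᵥ v) = (S *ᵥ v) ⬝ᵥ (S *ᵥ v) := by
    rw [← hSS, ← mulVec_mulVec, dotProduct_mulVec]
    congr 1
    conv_lhs => rw [← hT]
    rw [vecMul_transpose]
  calc v ⬝ᵥ v = ‖e v‖ ^ 2 := (norm_sq_aux v).symm
  _ ≤ (‖S⁻¹‖ * ‖e (S *ᵥ v)‖) ^ 2 := pow_le_pow_left₀ (norm_nonneg _) h2 2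
  _ = ‖P⁻¹‖ * (v ⬝ᵥ (P *ᵥ v)) := by
      rw [mul_pow, ← hnormSinv, ← sq, h3, ← norm_sq_aux]

/-- Derivative of `s ↦ exp(sA) x`. -/
private lemma hasDerivAt_u_aux (A : Matrix (Fin n) (Fin n) ℝ) (x : Fin n → ℝ) (t : ℝ) :
    HasDerivAt (fun s : ℝ => NormedSpace.exp (s • A) *ᵥ x)
      (A *ᵥ (NormedSpace.exp (t • A) *ᵥ x)) t := by
  have h1 : HasDerivAt (fun s : ℝ => NormedSpace.exp (s • A))
      (A * NormedSpace.exp (t • A)) t := hasDerivAt_exp_smul_const' A t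
  let L : Matrix (Fin n) (Fin n) ℝ →ₗ[ℝ] (Fin n → ℝ) :=
    { toFun := fun M => M *ᵥ x
      map_add' := fun M N => Matrix.add_mulVec M N x
      map_smul' := fun c M => Matrix.smul_mulVec c M x }
  have := (L.toContinuousLinearMap.hasFDerivAt.comp_hasDerivAt t h1)
  simp only [Matrix.mulVec_mulVec]; exact this

/-- Derivative of the dot product of two vector-valued functions. -/
private lemma hasDerivAt_dot_aux (u v : ℝ → Fin n → ℝ) (u' v' : Fin n → ℝ) (t : ℝ)
    (hu : HasDerivAt u u' t) (hv : HasDerivAt v v' t) :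
    HasDerivAt (fun s => u s ⬝ᵥ v s) (u' ⬝ᵥ v t + u t ⬝ᵥ v') t := by
  have hui := hasDerivAt_pi.mp hu
  have hvi := hasDerivAt_pi.mp hv
  have : HasDerivAt (fun s => ∑ i, u s i * v s i)
      (∑ i, (u' i * v t i + u t i * v' i)) t :=
    HasDerivAt.fun_sum fun i _ => (hui i).mul (hvi i)
  simpa [dotProduct, Finset.sum_add_distrib] using this

end Aux

/-- Exponential decay bound for the matrix exponential of a Hurwitz matrix `A` in terms of
the solution `P` of the Lyapunov equation `PA + AᵀP = −I`:
`‖exp(At)‖ ≤ √(‖P⁻¹‖‖P‖) exp(−t/(2‖P‖))` in the operator (spectral) norm. -/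
theorem hurwitz_exp_bound (n : ℕ) (A P : Matrix (Fin n) (Fin n) ℝ)
    (hHurwitz : ∀ z ∈ spectrum ℂ (A.map (Complex.ofReal)), z.re < 0)
    (hPsymm : P.IsSymm) (hPpd : P.PosDef)
    (hLyap : P * A + Aᵀ * P = -1) :
    ∀ t : ℝ, 0 ≤ t →
      ‖NormedSpace.exp (t • A)‖ ≤
        Real.sqrt (‖P⁻¹‖ * ‖P‖) * Real.exp (-(t / (2 * ‖P‖))) := by
  intro t ht
  rcases Nat.eq_zero_or_pos n with hn | hn
  · subst hn
    have h1 : (NormedSpace.exp (t • A)) = 0 := Subsingleton.elim _ _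
    rw [h1, norm_zero]
    positivity
  -- ‖P‖ > 0
  have hPpos : 0 < ‖P‖ := by
    rw [norm_pos_iff]
    intro h
    have hd := hPpd.det_pos
    rw [h, (by haveI : Nonempty (Fin n) := ⟨⟨0, hn⟩⟩; exact Matrix.det_zero :
      det (0 : Matrix (Fin n) (Fin n) ℝ) = 0)] at hd
    exact lt_irrefl 0 hd
  set c : ℝ := ‖P‖⁻¹ with hc
  have hcpos : 0 < c := inv_pos.mpr hPpos
  -- pointwise bound on trajectories
  have key : ∀ x : Fin n → ℝ,
      (NormedSpace.exp (t • A) *ᵥ x) ⬝ᵥ (NormedSpace.exp (t • A) *ᵥ x) ≤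
        (‖P⁻¹‖ * ‖P‖) * Real.exp (-(c * t)) * (x ⬝ᵥ x) := by
    intro x
    set u : ℝ → Fin n → ℝ := fun s => NormedSpace.exp (s • A) *ᵥ x with hu
    set f : ℝ → ℝ := fun s => u s ⬝ᵥ (P *ᵥ u s) with hf
    -- derivative of f
    have hfderiv : ∀ s : ℝ, HasDerivAt f (-(u s ⬝ᵥ u s)) s := by
      intro s
      have hus : HasDerivAt u (A *ᵥ u s) s := hasDerivAt_u_aux A x s
      have hPu : HasDerivAt (fun r => P *ᵥ u r) (P *ᵥ (A *ᵥ u s)) s := by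
        let L : (Fin n → ℝ) →ₗ[ℝ] (Fin n → ℝ) := P.mulVecLin
        have := (L.toContinuousLinearMap.hasFDerivAt.comp_hasDerivAt s hus)
        exact this
      have hD := hasDerivAt_dot_aux u (fun r => P *ᵥ u r) (A *ᵥ u s) (P *ᵥ (A *ᵥ u s)) s hus hPu
      have hval : (A *ᵥ u s) ⬝ᵥ (P *ᵥ u s) + u s ⬝ᵥ (P *ᵥ (A *ᵥ u s)) = -(u s ⬝ᵥ u s) := by
        have e1 : (A *ᵥ u s) ⬝ᵥ (P *ᵥ u s) = u s ⬝ᵥ ((Aᵀ * P) *ᵥ u s) := by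
          rw [dotProduct_comm, dotProduct_mulVec, ← mulVec_transpose, dotProduct_comm,
            ← mulVec_mulVec]
        have e2 : u s ⬝ᵥ (P *ᵥ (A *ᵥ u s)) = u s ⬝ᵥ ((P * A) *ᵥ u s) := by
          rw [mulVec_mulVec]
        rw [e1, e2, ← dotProduct_add, ← add_mulVec, add_comm, hLyap, neg_mulVec, one_mulVec,
          dotProduct_neg]
      exact hval ▸ hD
    -- Gronwall via antitone
    set g : ℝ → ℝ := fun s => f s * Real.exp (c * s) with hg
    have hgderiv : ∀ s : ℝ, HasDerivAt g ((-(u s ⬝ᵥ u s) + c * f s) * Real.exp (c * s)) s := by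
      intro s
      have he : HasDerivAt (fun r : ℝ => Real.exp (c * r)) (Real.exp (c * s) * c) s := by
        have h := (Real.hasDerivAt_exp (c * s)).comp s
          ((hasDerivAt_id s).const_mul c)
        simp only [mul_one] at h; exact h
      have := (hfderiv s).mul he
      exact this.congr_deriv (by ring)
    have hgderiv_nonpos : ∀ s : ℝ, (-(u s ⬝ᵥ u s) + c * f s) * Real.exp (c * s) ≤ 0 := by
      intro s
      have hfle : f s ≤ ‖P‖ * (u s ⬝ᵥ u s) := quad_le_aux P (u s)
      have : c * f s ≤ u s ⬝ᵥ u s := by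
        have := mul_le_mul_of_nonneg_left hfle (le_of_lt hcpos)
        rwa [hc, ← mul_assoc, inv_mul_cancel₀ hPpos.ne', one_mul] at this
      have h1 : -(u s ⬝ᵥ u s) + c * f s ≤ 0 := by linarith
      exact mul_nonpos_of_nonpos_of_nonneg h1 (Real.exp_nonneg _)
    have hganti : Antitone g :=
      antitone_of_deriv_nonpos (fun s => (hgderiv s).differentiableAt)
        (fun s => (hgderiv s).deriv ▸ hgderiv_nonpos s)
    have hgt : g t ≤ g 0 := hganti ht
    have hg0 : g 0 = f 0 := by simp [hg]
    have hf0 : f 0 ≤ ‖P‖ * (x ⬝ᵥ x) := by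
      have : u 0 = x := by simp [hu, NormedSpace.exp_zero, Matrix.one_mulVec]
      simpa [hf, this] using quad_le_aux P x
    -- f t ≤ ‖P‖ (x⬝x) exp(-ct)
    have hft : f t ≤ ‖P‖ * (x ⬝ᵥ x) * Real.exp (-(c * t)) := by
      have hgle : f t * Real.exp (c * t) ≤ ‖P‖ * (x ⬝ᵥ x) := le_trans hgt (hg0 ▸ hf0)
      have hepos : 0 < Real.exp (c * t) := Real.exp_pos _
      rw [Real.exp_neg]
      rw [← le_div_iff₀ hepos] at hgle
      simpa [div_eq_mul_inv] using hgle
    calc u t ⬝ᵥ u t ≤ ‖P⁻¹‖ * f t := le_quad_aux P hPpd (u t)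
    _ ≤ ‖P⁻¹‖ * (‖P‖ * (x ⬝ᵥ x) * Real.exp (-(c * t))) := by
        exact mul_le_mul_of_nonneg_left hft (norm_nonneg _)
    _ = (‖P⁻¹‖ * ‖P‖) * Real.exp (-(c * t)) * (x ⬝ᵥ x) := by ring
  -- convert exponent form
  have hexp : Real.exp (-(c * t)) = Real.exp (-(t / (2 * ‖P‖))) ^ 2 := by
    rw [← Real.exp_nat_mul]
    congr 1
    field_simp [hc]
    rw [hc]; field_simp; norm_num
  -- operator norm bound
  rw [Matrix.l2_opNorm_def]
  apply ContinuousLinearMap.opNorm_le_bound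
  · positivity
  intro y
  set e := (WithLp.equiv 2 (Fin n → ℝ)).symm with he
  have happ : (Matrix.toEuclideanLin.trans LinearMap.toContinuousLinearMap
      (NormedSpace.exp (t • A))) y =
      e (NormedSpace.exp (t • A) *ᵥ (WithLp.equiv 2 (Fin n → ℝ)) y) := rfl
  rw [happ]
  set x : Fin n → ℝ := (WithLp.equiv 2 (Fin n → ℝ)) y with hx
  have hyx : y = e x := rfl
  have hb := key x
  have hnorm1 : ‖e (NormedSpace.exp (t • A) *ᵥ x)‖ ^ 2 ≤
      ((‖P⁻¹‖ * ‖P‖) * Real.exp (-(c * t))) * ‖e x‖ ^ 2 := by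
    rw [norm_sq_aux, norm_sq_aux]
    calc (NormedSpace.exp (t • A) *ᵥ x) ⬝ᵥ (NormedSpace.exp (t • A) *ᵥ x)
        ≤ (‖P⁻¹‖ * ‖P‖) * Real.exp (-(c * t)) * (x ⬝ᵥ x) := hb
    _ = ((‖P⁻¹‖ * ‖P‖) * Real.exp (-(c * t))) * (x ⬝ᵥ x) := by ring
  have hRHS : 0 ≤ Real.sqrt (‖P⁻¹‖ * ‖P‖) * Real.exp (-(t / (2 * ‖P‖))) * ‖e x‖ := by
    positivity
  -- take square roots
  have hsq : (Real.sqrt (‖P⁻¹‖ * ‖P‖) * Real.exp (-(t / (2 * ‖P‖))) * ‖e x‖) ^ 2 =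
      ((‖P⁻¹‖ * ‖P‖) * Real.exp (-(c * t))) * ‖e x‖ ^ 2 := by
    rw [hexp, mul_pow, mul_pow, Real.sq_sqrt (by positivity)]
  have hfin := Real.sqrt_le_sqrt (hnorm1.trans_eq hsq.symm)
  rw [Real.sqrt_sq (norm_nonneg _), Real.sqrt_sq hRHS] at hfin
  rw [hyx]
  exact hfin
end

section
/- Let e : [0,∞) → ℝⁿ satisfy the linear ODE ė(t) = Δ̇(t) − Λ e(t) with Λ symmetric positive definite, where ‖e(0)‖ ≤ δ_b and ‖Δ̇(t)‖ ≤ δ_L for all t ≥ 0. Let P solve PΛ + ΛᵀP = −I and set 𝒫 = √(‖P⁻¹‖‖P‖). Then for all t ≥ 0, ‖e(t)‖ ≤ 𝒫(δ_b − 2δ_L‖P‖)·exp(−t/(2‖P‖)) + 2𝒫‖P‖δ_L. -/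
open Matrix
open scoped Matrix.Norms.L2Operator

section EEBAux

variable {n : ℕ}

open scoped MatrixOrder

lemma eeb_dot_nonneg (x : Fin n → ℝ) : 0 ≤ x ⬝ᵥ x :=
  Finset.sum_nonneg fun _ _ => mul_self_nonneg _

lemma eeb_dot_le (x y : Fin n → ℝ) :
    x ⬝ᵥ y ≤ Real.sqrt (x ⬝ᵥ x) * Real.sqrt (y ⬝ᵥ y) := by
  have h1 : ∀ z : Fin n → ℝ, Real.sqrt (z ⬝ᵥ z) = ‖(WithLp.equiv 2 (Fin n → ℝ)).symm z‖ := by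
    intro z
    rw [EuclideanSpace.norm_eq]
    congr 1
    simp [dotProduct, sq_abs, sq]
  have h2 : x ⬝ᵥ y
      = inner ℝ ((WithLp.equiv 2 (Fin n → ℝ)).symm x) ((WithLp.equiv 2 (Fin n → ℝ)).symm y) := by
    rw [PiLp.inner_apply]; simp [dotProduct, mul_comm]
  rw [h1, h1, h2]
  exact real_inner_le_norm _ _

lemma eeb_mulVec_le (A : Matrix (Fin n) (Fin n) ℝ) (x : Fin n → ℝ) :
    Real.sqrt ((A *ᵥ x) ⬝ᵥ (A *ᵥ x)) ≤ ‖A‖ * Real.sqrt (x ⬝ᵥ x) := by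
  have h1 : ∀ z : Fin n → ℝ, Real.sqrt (z ⬝ᵥ z) = ‖(WithLp.equiv 2 (Fin n → ℝ)).symm z‖ := by
    intro z
    rw [EuclideanSpace.norm_eq]
    congr 1
    simp [dotProduct, sq_abs, sq]
  rw [h1, h1]
  exact A.l2_opNorm_mulVec _

lemma eeb_symm_dot (S : Matrix (Fin n) (Fin n) ℝ) (hS : Sᵀ = S) (x y : Fin n → ℝ) :
    (S *ᵥ x) ⬝ᵥ (S *ᵥ y) = x ⬝ᵥ ((S * S) *ᵥ y) := by
  rw [← mulVec_mulVec, dotProduct_comm, dotProduct_mulVec, ← mulVec_transpose, hS,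
    dotProduct_comm]

lemma eeb_quad_lower {M : Matrix (Fin n) (Fin n) ℝ} (hM : M.PosDef) (x : Fin n → ℝ) :
    x ⬝ᵥ x ≤ ‖M⁻¹‖ * (x ⬝ᵥ (M *ᵥ x)) := by
  have hMdet : IsUnit M.det := hM.isUnit.map detMonoidHom
  have hinv : M⁻¹.PosDef := hM.inv
  set S := CFC.sqrt (M⁻¹) with hSdef
  have hSS : S * S = M⁻¹ := CFC.sqrt_mul_sqrt_self _ hinv.posSemidef.nonneg
  have hSh : Sᵀ = S := by
    have := (CFC.sqrt_nonneg (M⁻¹)).posSemidef.isHermitian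
    simpa [Matrix.IsHermitian, Matrix.conjTranspose_eq_transpose_of_trivial] using this
  have hMM : M⁻¹ * M = 1 := Matrix.nonsing_inv_mul M hMdet
  have hid : x ⬝ᵥ x = (S *ᵥ x) ⬝ᵥ (S *ᵥ (M *ᵥ x)) := by
    rw [eeb_symm_dot S hSh, hSS, mulVec_mulVec, hMM, one_mulVec]
  have hb1 : (S *ᵥ x) ⬝ᵥ (S *ᵥ x) ≤ ‖M⁻¹‖ * (x ⬝ᵥ x) := by
    rw [eeb_symm_dot S hSh, hSS]
    calc x ⬝ᵥ (M⁻¹ *ᵥ x) ≤ Real.sqrt (x ⬝ᵥ x) * Real.sqrt ((M⁻¹ *ᵥ x) ⬝ᵥ (M⁻¹ *ᵥ x)) :=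
          eeb_dot_le _ _
      _ ≤ Real.sqrt (x ⬝ᵥ x) * (‖M⁻¹‖ * Real.sqrt (x ⬝ᵥ x)) := by
          exact mul_le_mul_of_nonneg_left (eeb_mulVec_le _ _) (Real.sqrt_nonneg _)
      _ = ‖M⁻¹‖ * (Real.sqrt (x ⬝ᵥ x) * Real.sqrt (x ⬝ᵥ x)) := by ring
      _ = ‖M⁻¹‖ * (x ⬝ᵥ x) := by rw [Real.mul_self_sqrt (eeb_dot_nonneg x)]
  have hb2 : (S *ᵥ (M *ᵥ x)) ⬝ᵥ (S *ᵥ (M *ᵥ x)) = x ⬝ᵥ (M *ᵥ x) := by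
    rw [eeb_symm_dot S hSh, hSS, mulVec_mulVec, hMM, one_mulVec, dotProduct_comm]
  have hq : 0 ≤ x ⬝ᵥ (M *ᵥ x) := by
    rcases eq_or_ne x 0 with h | h
    · simp [h]
    · have := hM.dotProduct_mulVec_pos h; simpa using this.le
  have hnormnn : (0:ℝ) ≤ ‖M⁻¹‖ := norm_nonneg _
  have key : x ⬝ᵥ x ≤ Real.sqrt (‖M⁻¹‖ * (x ⬝ᵥ x)) * Real.sqrt (x ⬝ᵥ (M *ᵥ x)) := by
    calc x ⬝ᵥ x = (S *ᵥ x) ⬝ᵥ (S *ᵥ (M *ᵥ x)) := hid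
      _ ≤ Real.sqrt ((S *ᵥ x) ⬝ᵥ (S *ᵥ x)) * Real.sqrt ((S *ᵥ (M *ᵥ x)) ⬝ᵥ (S *ᵥ (M *ᵥ x))) :=
          eeb_dot_le _ _
      _ ≤ Real.sqrt (‖M⁻¹‖ * (x ⬝ᵥ x)) * Real.sqrt (x ⬝ᵥ (M *ᵥ x)) := by
          rw [hb2]
          exact mul_le_mul_of_nonneg_right (Real.sqrt_le_sqrt hb1) (Real.sqrt_nonneg _)
  rcases eq_or_lt_of_le (eeb_dot_nonneg x) with h0 | h0
  · rw [← h0]; positivity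
  · have hs : Real.sqrt (x ⬝ᵥ x) > 0 := Real.sqrt_pos.2 h0
    have key2 : Real.sqrt (x ⬝ᵥ x) ≤ Real.sqrt (‖M⁻¹‖ * (x ⬝ᵥ (M *ᵥ x))) := by
      have h1 : Real.sqrt (x ⬝ᵥ x) * Real.sqrt (x ⬝ᵥ x)
          ≤ (Real.sqrt ‖M⁻¹‖ * Real.sqrt (x ⬝ᵥ x)) * Real.sqrt (x ⬝ᵥ (M *ᵥ x)) := by
        rw [← Real.sqrt_mul hnormnn] at *
        calc Real.sqrt (x ⬝ᵥ x) * Real.sqrt (x ⬝ᵥ x) = x ⬝ᵥ x :=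
              Real.mul_self_sqrt (eeb_dot_nonneg x)
          _ ≤ _ := key
      have h2 : Real.sqrt (x ⬝ᵥ x) ≤ Real.sqrt ‖M⁻¹‖ * Real.sqrt (x ⬝ᵥ (M *ᵥ x)) := by
        nlinarith [Real.sqrt_nonneg (x ⬝ᵥ (M *ᵥ x)), Real.sqrt_nonneg ‖M⁻¹‖]
      rw [Real.sqrt_mul hnormnn]
      exact h2
    have hmm : 0 ≤ ‖M⁻¹‖ * (x ⬝ᵥ (M *ᵥ x)) := by positivity
    nlinarith [Real.mul_self_sqrt (eeb_dot_nonneg x), Real.mul_self_sqrt hmm,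
      Real.sqrt_nonneg (x ⬝ᵥ x), Real.sqrt_nonneg (‖M⁻¹‖ * (x ⬝ᵥ (M *ᵥ x)))]

lemma eeb_sym_part {L P : Matrix (Fin n) (Fin n) ℝ}
    (hsymm : L.IsSymm) (hpd : L.PosDef) (hLyap : P * L + Lᵀ * P = -1) :
    P + Pᵀ = -L⁻¹ := by
  have hdet : IsUnit L.det := hpd.isUnit.map detMonoidHom
  have hLL : L⁻¹ * L = 1 := Matrix.nonsing_inv_mul L hdet
  have hLL' : L * L⁻¹ = 1 := Matrix.mul_nonsing_inv L hdet
  have hLs : Lᵀ = L := hsymm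
  have h1 : P * L + L * P = -1 := by have h := hLyap; rw [hLs] at h; exact h
  have h2 : Pᵀ * L + L * Pᵀ = -1 := by
    have := congrArg Matrix.transpose hLyap
    simp only [Matrix.transpose_add, Matrix.transpose_mul, Matrix.transpose_transpose,
      Matrix.transpose_neg, Matrix.transpose_one, hLs] at this
    rw [add_comm] at this
    exact this
  set T := P + Pᵀ + L⁻¹ with hT
  have hTsym : Tᵀ = T := by
    rw [hT]
    simp [Matrix.transpose_nonsing_inv, hLs, add_comm, add_assoc, add_left_comm]
  have hTL : T * L + L * T = 0 := by
    have hexp : T * L + L * T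
        = (P * L + L * P) + (Pᵀ * L + L * Pᵀ) + (L⁻¹ * L + L * L⁻¹) := by
      rw [hT]; noncomm_ring
    rw [hexp, h1, h2, hLL, hLL']
    norm_num
  have hanti : T * L = -(L * T) := eq_neg_of_add_eq_zero_left hTL
  have htrace : Matrix.trace (T * L * T) = 0 := by
    have e1 : Matrix.trace (T * L * T) = Matrix.trace (T * T * L) := by
      rw [Matrix.trace_mul_comm (T * L) T, ← Matrix.mul_assoc]
    have e2 : Matrix.trace (T * L * T) = -Matrix.trace (T * T * L) := by
      rw [hanti]
      simp only [Matrix.neg_mul, Matrix.trace_neg, neg_inj]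
      rw [Matrix.mul_assoc, Matrix.trace_mul_comm]
    linarith [e1, e2]
  have hdiag : ∀ i, (T * L * T) i i = (fun k => T k i) ⬝ᵥ (L *ᵥ (fun k => T k i)) := by
    intro i
    have hrw : T * L * T = Tᵀ * (L * T) := by rw [hTsym, Matrix.mul_assoc]
    rw [hrw]
    simp only [Matrix.mul_apply, Matrix.transpose_apply, dotProduct, mulVec]
  have hnn : ∀ i, 0 ≤ (fun k => T k i) ⬝ᵥ (L *ᵥ (fun k => T k i)) := by
    intro i
    have := hpd.posSemidef.dotProduct_mulVec_nonneg (fun k => T k i)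
    simpa using this
  have hzero : ∀ i, (fun k => T k i) ⬝ᵥ (L *ᵥ (fun k => T k i)) = 0 := by
    have hsum : ∑ i, (fun k => T k i) ⬝ᵥ (L *ᵥ (fun k => T k i)) = 0 := by
      rw [← htrace, Matrix.trace]
      simp only [Matrix.diag]
      exact Finset.sum_congr rfl fun i _ => (hdiag i).symm
    intro i
    exact (Finset.sum_eq_zero_iff_of_nonneg (fun i _ => hnn i)).1 hsum i (Finset.mem_univ i)
  have hTzero : T = 0 := by
    ext j i
    by_contra hne
    have hcol : (fun k => T k i) ≠ 0 := by
      intro h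
      exact hne (by simpa using congrFun h j)
    have := hpd.dotProduct_mulVec_pos hcol
    simp only [star_trivial] at this
    exact absurd (hzero i) (ne_of_gt this)
  exact eq_neg_of_add_eq_zero_left hTzero

lemma eeb_exp_compare {a b t : ℝ} (ha : 0 < a) (hab : a ≤ b) (ht : 0 ≤ t) :
    a * (1 - Real.exp (-(b * t))) ≤ b * (1 - Real.exp (-(a * t))) := by
  set F : ℝ → ℝ := fun s => b * (1 - Real.exp (-(a * s))) - a * (1 - Real.exp (-(b * s))) with hF
  have hderiv : ∀ s, HasDerivAt F (a * b * Real.exp (-(a * s)) - a * b * Real.exp (-(b * s))) s := by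
    intro s
    have h1 : HasDerivAt (fun s => Real.exp (-(a * s))) (-a * Real.exp (-(a * s))) s := by
      have := (Real.hasDerivAt_exp (-(a * s))).comp s (((hasDerivAt_id s).const_mul a).neg)
      simpa [mul_comm, Function.comp_def, Pi.neg_def] using this
    have h2 : HasDerivAt (fun s => Real.exp (-(b * s))) (-b * Real.exp (-(b * s))) s := by
      have := (Real.hasDerivAt_exp (-(b * s))).comp s (((hasDerivAt_id s).const_mul b).neg)
      simpa [mul_comm, Function.comp_def, Pi.neg_def] using this
    have := ((h1.const_sub 1).const_mul b).fun_sub ((h2.const_sub 1).const_mul a)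
    refine this.congr_deriv ?_
    ring
  have hmono : MonotoneOn F (Set.Ici 0) := by
    apply monotoneOn_of_deriv_nonneg (convex_Ici 0)
    · exact fun s _ => (hderiv s).continuousAt.continuousWithinAt
    · exact fun s _ => (hderiv s).differentiableAt.differentiableWithinAt
    · intro s hs
      rw [interior_Ici] at hs
      rw [(hderiv s).deriv]
      have : Real.exp (-(b * s)) ≤ Real.exp (-(a * s)) := by
        apply Real.exp_le_exp.2
        have : a * s ≤ b * s := mul_le_mul_of_nonneg_right hab (le_of_lt hs)
        linarith
      nlinarith [mul_pos ha (lt_of_lt_of_le ha hab)]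
  have h0 : F 0 ≤ F t := hmono (Set.self_mem_Ici) (Set.mem_Ici.2 ht) ht
  have hF0 : F 0 = 0 := by simp [hF]
  rw [hF0] at h0
  simp only [hF] at h0
  linarith

end EEBAux


set_option maxHeartbeats 1000000 in
/-- Lemma 3, first bound: if `ė(t) = Δ̇(t) − Λ e(t)` with `Λ` symmetric positive definite,
`‖e(0)‖ ≤ δ_b`, `‖Δ̇(t)‖ ≤ δ_L`, and `P` solves `PΛ + ΛᵀP = −I`, then with
`𝒫 = √(‖P⁻¹‖‖P‖)` one has
`‖e(t)‖ ≤ 𝒫(δ_b − 2δ_L‖P‖)e^{−t/(2‖P‖)} + 2𝒫‖P‖δ_L` for all `t ≥ 0`.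
Vector norms are the Euclidean norms `√(x ⬝ᵥ x)`; matrix norms are operator norms. -/
theorem estimation_error_bound (n : ℕ) (L P : Matrix (Fin n) (Fin n) ℝ)
    (hsymm : L.IsSymm) (hpd : L.PosDef)
    (e d : ℝ → (Fin n → ℝ)) (db dLip : ℝ)
    (hode : ∀ t, 0 ≤ t → HasDerivAt e (d t - L *ᵥ e t) t)
    (h0 : Real.sqrt (e 0 ⬝ᵥ e 0) ≤ db)
    (hd : ∀ t, 0 ≤ t → Real.sqrt (d t ⬝ᵥ d t) ≤ dLip)
    (hLyap : P * L + Lᵀ * P = -1) :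
    ∀ t, 0 ≤ t →
      Real.sqrt (e t ⬝ᵥ e t) ≤
        Real.sqrt (‖P⁻¹‖ * ‖P‖) * (db - 2 * dLip * ‖P‖) * Real.exp (-(t / (2 * ‖P‖))) +
          2 * Real.sqrt (‖P⁻¹‖ * ‖P‖) * ‖P‖ * dLip := by
  have hdb : 0 ≤ db := le_trans (Real.sqrt_nonneg _) h0
  have hdL : 0 ≤ dLip := le_trans (Real.sqrt_nonneg _) (hd 0 le_rfl)
  rcases Nat.eq_zero_or_pos n with hn | hn
  · subst hn
    intro t ht
    have hP0 : P = 0 := by ext i j; exact i.elim0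
    have hdot : e t ⬝ᵥ e t = 0 := by simp [dotProduct]
    have hPi0 : (0 : Matrix (Fin 0) (Fin 0) ℝ)⁻¹ = 0 := by ext i j; exact i.elim0
    rw [hdot, hP0, hPi0]
    simp
  -- main case n ≥ 1
  have i0 : Fin n := ⟨0, hn⟩
  have hPs : P + Pᵀ = -L⁻¹ := eeb_sym_part hsymm hpd hLyap
  have hLdet : IsUnit L.det := hpd.isUnit.map detMonoidHom
  have hLinv_pd : L⁻¹.PosDef := hpd.inv
  -- x ⬝ᵥ P x is negative definite
  have hPquad : ∀ x : Fin n → ℝ, x ⬝ᵥ (P *ᵥ x) = -(x ⬝ᵥ (L⁻¹ *ᵥ x)) / 2 := by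
    intro x
    have h1 : x ⬝ᵥ ((P + Pᵀ) *ᵥ x) = x ⬝ᵥ ((-L⁻¹) *ᵥ x) := by rw [hPs]
    have h2 : x ⬝ᵥ (Pᵀ *ᵥ x) = x ⬝ᵥ (P *ᵥ x) := by
      rw [mulVec_transpose, dotProduct_comm]
      exact (dotProduct_mulVec x P x).symm
    rw [Matrix.add_mulVec, dotProduct_add, h2, Matrix.neg_mulVec, dotProduct_neg] at h1
    linarith
  -- P is invertible
  have hPdet : IsUnit P.det := by
    rw [isUnit_iff_ne_zero]
    intro hdet0
    obtain ⟨v, hv0, hv⟩ := (Matrix.exists_mulVec_eq_zero_iff).2 hdet0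
    have hneg := hPquad v
    rw [hv, dotProduct_zero] at hneg
    have := hLinv_pd.dotProduct_mulVec_pos hv0
    simp only [star_trivial] at this
    linarith
  have hPinvP : P⁻¹ * P = 1 := Matrix.nonsing_inv_mul P hPdet
  -- norm of identity ≥ 1
  have hone : (1:ℝ) ≤ ‖(1 : Matrix (Fin n) (Fin n) ℝ)‖ := by
    set x : Fin n → ℝ := Pi.single i0 1 with hx
    have hxd : x ⬝ᵥ x = 1 := by simp [hx]
    have := eeb_mulVec_le (1 : Matrix (Fin n) (Fin n) ℝ) x
    rw [one_mulVec, hxd, Real.sqrt_one, mul_one] at this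
    linarith
  have hKge1 : (1:ℝ) ≤ ‖P⁻¹‖ * ‖P‖ :=
    le_trans (le_trans hone (le_of_eq (by rw [hPinvP]))) (Matrix.l2_opNorm_mul P⁻¹ P)
  have hPnormpos : 0 < ‖P‖ := by
    by_contra h
    push_neg at h
    have : ‖P⁻¹‖ * ‖P‖ ≤ 0 := mul_nonpos_of_nonneg_of_nonpos (norm_nonneg _) h
    linarith
  -- ‖L⁻¹‖ ≤ 2‖P‖
  have hLinvnorm : ‖L⁻¹‖ ≤ 2 * ‖P‖ := by
    have hPt : ‖Pᵀ‖ = ‖P‖ := by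
      have := Matrix.l2_opNorm_conjTranspose P
      simpa [Matrix.conjTranspose_eq_transpose_of_trivial] using this
    calc ‖L⁻¹‖ = ‖-(P + Pᵀ)‖ := by rw [hPs]; simp
      _ = ‖P + Pᵀ‖ := norm_neg _
      _ ≤ ‖P‖ + ‖Pᵀ‖ := norm_add_le _ _
      _ = 2 * ‖P‖ := by rw [hPt]; ring
  have hLinvpos : 0 < ‖L⁻¹‖ := by
    rw [norm_pos_iff]
    intro h
    have h1 : L⁻¹ * L = 1 := Matrix.nonsing_inv_mul L hLdet
    rw [h, Matrix.zero_mul] at h1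
    have := congrFun (congrFun h1 i0) i0
    simp [Matrix.one_apply] at this
  set lam : ℝ := ‖L⁻¹‖⁻¹ with hlam
  set a : ℝ := (2 * ‖P‖)⁻¹ with ha
  have hlampos : 0 < lam := inv_pos.2 hLinvpos
  have hapos : 0 < a := inv_pos.2 (by linarith)
  have hal : a ≤ lam := inv_anti₀ hLinvpos hLinvnorm
  have hquadL : ∀ x : Fin n → ℝ, lam * (x ⬝ᵥ x) ≤ x ⬝ᵥ (L *ᵥ x) := by
    intro x
    have := eeb_quad_lower hpd x
    rw [hlam]
    rw [inv_mul_le_iff₀ hLinvpos]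
    linarith [this]
  intro t ht
  set q : ℝ → ℝ := fun τ => e τ ⬝ᵥ e τ with hqdef
  have hqnn : ∀ s, 0 ≤ q s := fun s => eeb_dot_nonneg _
  -- derivative of q
  have hq : ∀ s, 0 ≤ s → HasDerivAt q (2 * (e s ⬝ᵥ (d s - L *ᵥ e s))) s := by
    intro s hs
    have hc : ∀ i, HasDerivAt (fun τ => e τ i) ((d s - L *ᵥ e s) i) s :=
      fun i => hasDerivAt_pi.1 (hode s hs) i
    have hsum : HasDerivAt (fun τ => ∑ i, e τ i * e τ i)
        (∑ i, ((d s - L *ᵥ e s) i * e s i + e s i * (d s - L *ᵥ e s) i)) s :=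
      HasDerivAt.fun_sum fun i _ => (hc i).mul (hc i)
    have hfun : q = fun τ => ∑ i, e τ i * e τ i := by
      funext τ; simp [hqdef, dotProduct]
    have hval : 2 * (e s ⬝ᵥ (d s - L *ᵥ e s))
        = ∑ i, ((d s - L *ᵥ e s) i * e s i + e s i * (d s - L *ᵥ e s) i) := by
      simp only [dotProduct, Finset.mul_sum, ← Finset.sum_add_distrib]
      congr 1; funext i; ring
    rw [hfun, hval]
    exact hsum
  -- bound db, the key Grönwall estimate for every ε > 0
  have key : ∀ ε : ℝ, 0 < ε → Real.sqrt (q t)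
      ≤ db * Real.exp (-(lam * t)) + dLip / lam * (1 - Real.exp (-(lam * t))) + ε := by
    intro ε hε
    set g : ℝ → ℝ := fun τ => Real.sqrt (ε ^ 2 + q τ) with hgdef
    have hgq : ∀ s, 0 < ε ^ 2 + q s := fun s => by nlinarith [hqnn s]
    have hgpos : ∀ s, 0 < g s := fun s => Real.sqrt_pos.2 (hgq s)
    have hge : ∀ s, ε ≤ g s := by
      intro s
      have : ε = Real.sqrt (ε ^ 2) := by rw [Real.sqrt_sq hε.le]
      rw [this]
      exact Real.sqrt_le_sqrt (by nlinarith [hqnn s])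
    have hsqle : ∀ s, Real.sqrt (q s) ≤ g s := by
      intro s
      exact Real.sqrt_le_sqrt (by nlinarith)
    have hgsq : ∀ s, g s ^ 2 = ε ^ 2 + q s := fun s => Real.sq_sqrt (hgq s).le
    have hg : ∀ s, 0 ≤ s →
        HasDerivAt g (2 * (e s ⬝ᵥ (d s - L *ᵥ e s)) / (2 * g s)) s := by
      intro s hs
      have := ((hq s hs).const_add (ε ^ 2)).sqrt (ne_of_gt (hgq s))
      exact this
    set C : ℝ := dLip / lam + ε with hC
    set h : ℝ → ℝ := fun s => Real.exp (lam * s) * (g s - C) with hhdef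
    have hh : ∀ s, 0 ≤ s → HasDerivAt h
        (lam * Real.exp (lam * s) * (g s - C)
          + Real.exp (lam * s) * (2 * (e s ⬝ᵥ (d s - L *ᵥ e s)) / (2 * g s))) s := by
      intro s hs
      have hexp : HasDerivAt (fun s => Real.exp (lam * s)) (lam * Real.exp (lam * s)) s := by
        have h1 : HasDerivAt (fun s : ℝ => lam * s) lam s := by
          simpa using (hasDerivAt_id s).const_mul lam
        have h2 := (Real.hasDerivAt_exp (lam * s)).comp s h1
        have h3 : HasDerivAt (fun s => Real.exp (lam * s)) (Real.exp (lam * s) * lam) s := h2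
        simpa [mul_comm] using h3
      exact hexp.mul ((hg s hs).sub_const C)
    have hhderiv_nonpos : ∀ s, 0 ≤ s →
        lam * Real.exp (lam * s) * (g s - C)
          + Real.exp (lam * s) * (2 * (e s ⬝ᵥ (d s - L *ᵥ e s)) / (2 * g s)) ≤ 0 := by
      intro s hs
      have hX : e s ⬝ᵥ (d s - L *ᵥ e s) ≤ Real.sqrt (q s) * dLip - lam * q s := by
        have h1 : e s ⬝ᵥ d s ≤ Real.sqrt (q s) * dLip := by
          calc e s ⬝ᵥ d s ≤ Real.sqrt (q s) * Real.sqrt (d s ⬝ᵥ d s) := eeb_dot_le _ _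
            _ ≤ Real.sqrt (q s) * dLip :=
              mul_le_mul_of_nonneg_left (hd s hs) (Real.sqrt_nonneg _)
        have h2 : lam * q s ≤ e s ⬝ᵥ (L *ᵥ e s) := hquadL (e s)
        rw [dotProduct_sub]
        linarith
      have hdiv : 2 * (e s ⬝ᵥ (d s - L *ᵥ e s)) / (2 * g s) = (e s ⬝ᵥ (d s - L *ᵥ e s)) / g s :=
        mul_div_mul_left _ _ two_ne_zero
      rw [hdiv]
      have hinner : lam * (g s - C) + (e s ⬝ᵥ (d s - L *ᵥ e s)) / g s ≤ 0 := by
        have hnum : lam * (g s - C) * g s + (Real.sqrt (q s) * dLip - lam * q s) ≤ 0 := by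
          have e1 : g s ^ 2 = ε ^ 2 + q s := hgsq s
          have e2 : Real.sqrt (q s) ≤ g s := hsqle s
          have e3 : ε ≤ g s := hge s
          have e4 : 0 < g s := hgpos s
          have e5 : lam * C = dLip + lam * ε := by
            rw [hC]; field_simp
          have e6 : lam * (g s - C) * g s = lam * (ε ^ 2 + q s) - (dLip + lam * ε) * g s := by
            rw [← e1, ← e5]; ring
          have e7 : Real.sqrt (q s) * dLip ≤ g s * dLip := mul_le_mul_of_nonneg_right e2 hdL
          have e8 : lam * ε * ε ≤ lam * ε * g s :=
            mul_le_mul_of_nonneg_left e3 (mul_pos hlampos hε).le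
          nlinarith [e6, e7, e8]
        have hfrac : (e s ⬝ᵥ (d s - L *ᵥ e s)) / g s
            ≤ (Real.sqrt (q s) * dLip - lam * q s) / g s :=
          (div_le_div_iff_of_pos_right (hgpos s)).2 hX
        calc lam * (g s - C) + (e s ⬝ᵥ (d s - L *ᵥ e s)) / g s
            ≤ lam * (g s - C) + (Real.sqrt (q s) * dLip - lam * q s) / g s := by linarith
          _ = (lam * (g s - C) * g s + (Real.sqrt (q s) * dLip - lam * q s)) / g s := by
              field_simp [(hgpos s).ne']
          _ ≤ 0 := div_nonpos_of_nonpos_of_nonneg hnum (hgpos s).le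
      have hE : 0 < Real.exp (lam * s) := Real.exp_pos _
      calc lam * Real.exp (lam * s) * (g s - C)
            + Real.exp (lam * s) * ((e s ⬝ᵥ (d s - L *ᵥ e s)) / g s)
          = Real.exp (lam * s) * (lam * (g s - C) + (e s ⬝ᵥ (d s - L *ᵥ e s)) / g s) := by ring
        _ ≤ 0 := mul_nonpos_of_nonneg_of_nonpos hE.le hinner
    have hanti : AntitoneOn h (Set.Ici 0) := by
      apply antitoneOn_of_deriv_nonpos (convex_Ici 0)
      · exact fun s hs => (hh s hs).continuousAt.continuousWithinAt
      · intro s hs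
        rw [interior_Ici] at hs
        exact (hh s (le_of_lt hs)).differentiableAt.differentiableWithinAt
      · intro s hs
        rw [interior_Ici] at hs
        rw [(hh s (le_of_lt hs)).deriv]
        exact hhderiv_nonpos s (le_of_lt hs)
    have hht : h t ≤ h 0 := hanti Set.self_mem_Ici (Set.mem_Ici.2 ht) ht
    have hht2 : Real.exp (lam * t) * (g t - C) ≤ g 0 - C := by
      have h4 := hht
      rw [hhdef] at h4
      simpa using h4
    have hgt : g t ≤ C + (g 0 - C) * Real.exp (-(lam * t)) := by
      have hEpos : 0 < Real.exp (-(lam * t)) := Real.exp_pos _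
      have hprod : Real.exp (lam * t) * Real.exp (-(lam * t)) = 1 := by
        rw [← Real.exp_add]; simp
      have hmul := mul_le_mul_of_nonneg_right hht2 hEpos.le
      have h3 : Real.exp (lam * t) * (g t - C) * Real.exp (-(lam * t)) = g t - C := by
        rw [mul_comm (Real.exp (lam * t)) (g t - C), mul_assoc, hprod, mul_one]
      rw [h3] at hmul
      linarith
    have hg0 : g 0 ≤ db + ε := by
      have : g 0 = Real.sqrt (ε ^ 2 + q 0) := rfl
      have hle : ε ^ 2 + q 0 ≤ (ε + Real.sqrt (q 0)) ^ 2 := by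
        nlinarith [Real.sq_sqrt (hqnn 0), Real.sqrt_nonneg (q 0)]
      calc g 0 ≤ Real.sqrt ((ε + Real.sqrt (q 0)) ^ 2) := Real.sqrt_le_sqrt hle
        _ = ε + Real.sqrt (q 0) := Real.sqrt_sq (by positivity)
        _ ≤ db + ε := by
            have : Real.sqrt (q 0) ≤ db := h0
            linarith
    have hEl1 : Real.exp (-(lam * t)) ≤ 1 := Real.exp_le_one_iff.2 (by nlinarith)
    have hEl0 : 0 < Real.exp (-(lam * t)) := Real.exp_pos _
    calc Real.sqrt (q t) ≤ g t := hsqle t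
      _ ≤ C + (g 0 - C) * Real.exp (-(lam * t)) := hgt
      _ ≤ C + (db + ε - C) * Real.exp (-(lam * t)) := by nlinarith
      _ = db * Real.exp (-(lam * t)) + dLip / lam * (1 - Real.exp (-(lam * t)))
          + (ε * Real.exp (-(lam * t)) + (dLip / lam + ε) * (1 - Real.exp (-(lam * t)))
            - dLip / lam * (1 - Real.exp (-(lam * t)))) := by rw [hC]; ring
      _ ≤ db * Real.exp (-(lam * t)) + dLip / lam * (1 - Real.exp (-(lam * t))) + ε := by
          have : ε * Real.exp (-(lam * t)) + ε * (1 - Real.exp (-(lam * t))) = ε := by ring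
          nlinarith
  -- remove ε
  have hB : Real.sqrt (q t)
      ≤ db * Real.exp (-(lam * t)) + dLip / lam * (1 - Real.exp (-(lam * t))) := by
    by_contra hcon
    push_neg at hcon
    have h2 := key ((Real.sqrt (q t)
        - (db * Real.exp (-(lam * t)) + dLip / lam * (1 - Real.exp (-(lam * t))))) / 2)
      (by linarith)
    linarith
  -- final comparison
  set PP : ℝ := Real.sqrt (‖P⁻¹‖ * ‖P‖) with hPP
  have hPP1 : 1 ≤ PP := by
    rw [hPP, show (1:ℝ) = Real.sqrt 1 from (Real.sqrt_one).symm]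
    exact Real.sqrt_le_sqrt hKge1
  set El : ℝ := Real.exp (-(lam * t)) with hEl
  set Ea : ℝ := Real.exp (-(a * t)) with hEa
  have hEaEq : Real.exp (-(t / (2 * ‖P‖))) = Ea := by
    rw [hEa, ha]
    congr 1
    field_simp
  have hElEa : El ≤ Ea := by
    rw [hEl, hEa]
    apply Real.exp_le_exp.2
    have : a * t ≤ lam * t := mul_le_mul_of_nonneg_right hal ht
    linarith
  have hEa1 : Ea ≤ 1 := Real.exp_le_one_iff.2 (by nlinarith)
  have hEa0 : 0 < Ea := Real.exp_pos _
  have hEl0 : 0 < El := Real.exp_pos _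
  -- first term
  have ht1 : db * El ≤ PP * db * Ea := by
    have u1 : db * El ≤ db * Ea := mul_le_mul_of_nonneg_left hElEa hdb
    have u2 : db * Ea ≤ PP * (db * Ea) := le_mul_of_one_le_left (by positivity) hPP1
    nlinarith [u1, u2]
  -- second term
  have ht2 : dLip / lam * (1 - El) ≤ 2 * PP * ‖P‖ * dLip * (1 - Ea) := by
    have hcmp : a * (1 - El) ≤ lam * (1 - Ea) := eeb_exp_compare hapos hal ht
    have h2P : (1:ℝ) / a = 2 * ‖P‖ := by rw [ha]; field_simp
    have halam : 0 < a * lam := mul_pos hapos hlampos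
    have hstep : (1 - El) / lam ≤ 2 * ‖P‖ * (1 - Ea) := by
      have hx : (1 - El) / lam = a * (1 - El) / (a * lam) := by
        rw [div_eq_div_iff hlampos.ne' halam.ne']
        ring
      have hy : a * (1 - El) / (a * lam) ≤ lam * (1 - Ea) / (a * lam) :=
        (div_le_div_iff_of_pos_right halam).2 hcmp
      have hz : lam * (1 - Ea) / (a * lam) = 2 * ‖P‖ * (1 - Ea) := by
        rw [ha]
        field_simp
      rw [hx, ← hz]
      exact hy
    have : dLip / lam * (1 - El) = dLip * ((1 - El) / lam) := by ring
    rw [this]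
    calc dLip * ((1 - El) / lam) ≤ dLip * (2 * ‖P‖ * (1 - Ea)) :=
          mul_le_mul_of_nonneg_left hstep hdL
      _ ≤ 2 * PP * ‖P‖ * dLip * (1 - Ea) := by
          have w0 : 0 ≤ 1 - Ea := by linarith
          have w : 0 ≤ 2 * ‖P‖ * dLip * (1 - Ea) :=
            mul_nonneg (mul_nonneg (mul_nonneg (by norm_num) hPnormpos.le) hdL) w0
          nlinarith [mul_le_mul_of_nonneg_right hPP1 w]
  have hgoal : Real.sqrt (q t) ≤ PP * db * Ea + 2 * PP * ‖P‖ * dLip * (1 - Ea) := by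
    calc Real.sqrt (q t) ≤ db * El + dLip / lam * (1 - El) := hB
      _ ≤ PP * db * Ea + 2 * PP * ‖P‖ * dLip * (1 - Ea) := add_le_add ht1 ht2
  rw [hEaEq]
  calc Real.sqrt (e t ⬝ᵥ e t) ≤ PP * db * Ea + 2 * PP * ‖P‖ * dLip * (1 - Ea) := hgoal
    _ = PP * (db - 2 * dLip * ‖P‖) * Ea + 2 * PP * ‖P‖ * dLip := by ring
end

section
/- Let Δ̂ : [0,∞) → ℝⁿ satisfy Δ̂'(t) = Λ(Δ(t) − Δ̂(t)) with Δ̂(0) = 0, where Λ is symmetric positive definite and ‖Δ(t)‖ ≤ δ_b for all t ≥ 0. Let P solve PΛ + ΛᵀP = −I and 𝒫 = √(‖P⁻¹‖‖P‖). Then for all t ≥ 0, ‖Δ̂(t)‖ ≤ 2𝒫 δ_b ‖Λ‖ ‖P‖ (1 − exp(−t/(2‖P‖))). -/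
open Matrix
open scoped Matrix.Norms.L2Operator

section Aux

open scoped RealInnerProductSpace
open Set

/-- anticommuting with a positive definite matrix forces zero -/
private lemma aux_anticomm_zero (n : ℕ) (L R : Matrix (Fin n) (Fin n) ℝ) (hpd : L.PosDef)
    (hR : R * L + L * R = 0) : R = 0 := by
  classical
  set hA := hpd.1 with hAdef
  set U : Matrix (Fin n) (Fin n) ℝ := (hA.eigenvectorUnitary : Matrix (Fin n) (Fin n) ℝ) with hU
  set d : Fin n → ℝ := hA.eigenvalues with hd
  have hU1 : star U * U = 1 := Unitary.coe_star_mul_self hA.eigenvectorUnitary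
  have hU2 : U * star U = 1 := Unitary.coe_mul_star_self hA.eigenvectorUnitary
  have hspec : L = U * Matrix.diagonal (RCLike.ofReal ∘ d) * star U := hA.spectral_theorem
  have hdg : Matrix.diagonal (RCLike.ofReal ∘ d) = Matrix.diagonal d := by congr 1
  set Dg : Matrix (Fin n) (Fin n) ℝ := Matrix.diagonal d with hDg
  rw [hdg] at hspec
  set S : Matrix (Fin n) (Fin n) ℝ := star U * R * U with hS
  have key : S * Dg + Dg * S = 0 := by
    have : star U * (R * L + L * R) * U = 0 := by rw [hR]; simp
    calc S * Dg + Dg * S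
        = star U * (R * L + L * R) * U := by
          rw [hspec]
          simp only [Matrix.mul_add, Matrix.add_mul, hS]
          congr 1
          · calc star U * R * U * Dg
                = star U * R * (U * Dg * (star U * U)) := by rw [hU1]; noncomm_ring
              _ = star U * (R * (U * Dg * star U)) * U := by noncomm_ring
          · calc Dg * (star U * R * U)
                = (star U * U) * Dg * star U * R * U := by rw [hU1]; noncomm_ring
              _ = star U * (U * Dg * star U * R) * U := by noncomm_ring
      _ = 0 := this
  have hSz : S = 0 := by
    ext i j
    have h1 := congrFun (congrFun key i) j
    simp only [hDg, Matrix.add_apply, Matrix.mul_diagonal, Matrix.diagonal_mul,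
      Matrix.zero_apply] at h1
    have hpos : 0 < d j + d i := add_pos (hpd.eigenvalues_pos j) (hpd.eigenvalues_pos i)
    have : S i j * (d j + d i) = 0 := by ring_nf; ring_nf at h1; linarith
    simpa [hpos.ne'] using mul_eq_zero.mp this
  have hRS : R = U * S * star U := by
    rw [hS]
    calc R = (U * star U) * R * (U * star U) := by rw [hU2]; noncomm_ring
      _ = U * (star U * R * U) * star U := by noncomm_ring
  rw [hRS, hSz]; simp

private lemma aux_norm_eq (n : ℕ) (x : Fin n → ℝ) :
    ‖(EuclideanSpace.equiv (Fin n) ℝ).symm x‖ = Real.sqrt (x ⬝ᵥ x) := by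
  rw [EuclideanSpace.norm_eq]
  congr 1
  simp [dotProduct, Real.norm_eq_abs, ← sq, sq_abs]

private lemma aux_inner_eq (n : ℕ) (x y : Fin n → ℝ) :
    ⟪(EuclideanSpace.equiv (Fin n) ℝ).symm x, (EuclideanSpace.equiv (Fin n) ℝ).symm y⟫
      = x ⬝ᵥ y := by
  simp [PiLp.inner_apply, RCLike.inner_apply, dotProduct, mul_comm]

/-- coercivity from the inverse norm -/
private lemma aux_coercive (n : ℕ) (L : Matrix (Fin n) (Fin n) ℝ) (hpd : L.PosDef)
    (x : Fin n → ℝ) : ‖L⁻¹‖⁻¹ * (x ⬝ᵥ x) ≤ x ⬝ᵥ (L *ᵥ x) := by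
  classical
  set eE := (EuclideanSpace.equiv (Fin n) ℝ).symm with heE
  set C := (open MatrixOrder in CFC.sqrt L) with hC
  have hCC : C * C = L := open MatrixOrder in CFC.sqrt_mul_sqrt_self L hpd.posSemidef.nonneg
  have hCh : C.IsHermitian := open MatrixOrder in (CFC.sqrt_nonneg L).posSemidef.1
  have hdetL : L.det ≠ 0 := hpd.det_pos.ne'
  have hdetC : C.det ≠ 0 := by
    intro h
    rw [← hCC, det_mul, h, mul_zero] at hdetL
    exact hdetL rfl
  have hCinv : C⁻¹ * C = 1 := nonsing_inv_mul C (isUnit_iff_ne_zero.mpr hdetC)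
  have key1 : x ⬝ᵥ (L *ᵥ x) = (C *ᵥ x) ⬝ᵥ (C *ᵥ x) := by
    rw [← hCC, ← mulVec_mulVec, dotProduct_mulVec x C, ← mulVec_transpose]
    congr 1
    rw [← conjTranspose_eq_transpose_of_trivial, hCh]
  have hx : x = C⁻¹ *ᵥ (C *ᵥ x) := by rw [mulVec_mulVec, hCinv, one_mulVec]
  have h2 : ‖eE x‖ ≤ ‖C⁻¹‖ * ‖eE (C *ᵥ x)‖ := by
    conv_lhs => rw [hx]
    exact Matrix.l2_opNorm_mulVec C⁻¹ (eE (C *ᵥ x))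
  have hCiC : C⁻¹ * C⁻¹ = L⁻¹ := by rw [← hCC, Matrix.mul_inv_rev]
  have h3 : ‖C⁻¹‖ * ‖C⁻¹‖ = ‖L⁻¹‖ := by
    rw [← Matrix.l2_opNorm_conjTranspose_mul_self C⁻¹]
    congr 1
    rw [← hCiC]
    congr 1
    rw [conjTranspose_nonsing_inv, hCh]
  have hxx : x ⬝ᵥ x = ‖eE x‖ ^ 2 := by
    have hnn : (0:ℝ) ≤ x ⬝ᵥ x := Finset.sum_nonneg fun i _ => mul_self_nonneg (x i)
    rw [heE, aux_norm_eq, Real.sq_sqrt hnn]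
  have hcx : (C *ᵥ x) ⬝ᵥ (C *ᵥ x) = ‖eE (C *ᵥ x)‖ ^ 2 := by
    have hnn : (0:ℝ) ≤ (C *ᵥ x) ⬝ᵥ (C *ᵥ x) := Finset.sum_nonneg fun i _ => mul_self_nonneg _
    rw [heE, aux_norm_eq, Real.sq_sqrt hnn]
  rw [key1, hxx, hcx]
  rcases le_or_gt ‖L⁻¹‖⁻¹ 0 with h | h
  · nlinarith [sq_nonneg ‖eE (C *ᵥ x)‖, sq_nonneg ‖eE x‖]
  · have hLinv : 0 < ‖L⁻¹‖ := inv_pos.mp h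
    rw [inv_mul_le_iff₀ hLinv]
    calc ‖eE x‖ ^ 2 ≤ (‖C⁻¹‖ * ‖eE (C *ᵥ x)‖)^2 := by
          nlinarith [norm_nonneg (eE x), norm_nonneg (eE (C *ᵥ x)),
            mul_nonneg (norm_nonneg C⁻¹) (norm_nonneg (eE (C *ᵥ x)))]
      _ = ‖L⁻¹‖ * ‖eE (C *ᵥ x)‖^2 := by rw [mul_pow, ← h3]; ring

/-- Cauchy–Schwarz with the operator norm -/
private lemma aux_cs (n : ℕ) (L : Matrix (Fin n) (Fin n) ℝ) (x y : Fin n → ℝ) :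
    x ⬝ᵥ (L *ᵥ y) ≤ ‖L‖ * Real.sqrt (x ⬝ᵥ x) * Real.sqrt (y ⬝ᵥ y) := by
  set eE := (EuclideanSpace.equiv (Fin n) ℝ).symm with heE
  calc x ⬝ᵥ (L *ᵥ y) = ⟪eE x, eE (L *ᵥ y)⟫ := (aux_inner_eq n x _).symm
    _ ≤ ‖eE x‖ * ‖eE (L *ᵥ y)‖ := real_inner_le_norm _ _
    _ ≤ ‖eE x‖ * (‖L‖ * ‖eE y‖) :=
        mul_le_mul_of_nonneg_left (Matrix.l2_opNorm_mulVec L (eE y)) (norm_nonneg _)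
    _ = ‖L‖ * Real.sqrt (x ⬝ᵥ x) * Real.sqrt (y ⬝ᵥ y) := by
        rw [heE, aux_norm_eq, aux_norm_eq]; ring

/-- scalar ODE comparison -/
private lemma aux_ode_comp (c K : ℝ) (hc : 0 < c) (hK : 0 ≤ K) (g g' : ℝ → ℝ)
    (hg : ∀ t, 0 ≤ t → HasDerivAt g (g' t) t)
    (hg0 : g 0 = 0)
    (hbound : ∀ t, 0 ≤ t → g' t ≤ 2 * Real.sqrt (g t) * (c*K - c * Real.sqrt (g t))) :
    ∀ t, 0 ≤ t → Real.sqrt (g t) ≤ K * (1 - Real.exp (-(c*t))) := by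
  intro t0 ht0
  set y : ℝ → ℝ := fun s => K * (1 - Real.exp (-(c*s))) with hy
  have hy_deriv : ∀ x : ℝ, HasDerivAt y (K * (c * Real.exp (-(c*x)))) x := by
    intro x
    have h1 : HasDerivAt (fun s : ℝ => -(c*s)) (-c) x := by
      have := ((hasDerivAt_id x).const_mul c).neg
      simp only [mul_one] at this
      exact this
    have h3 := (h1.exp.const_sub 1).const_mul K
    exact h3.congr_deriv (by ring)
  have hy_nn : ∀ x : ℝ, 0 ≤ x → 0 ≤ y x := by
    intro x hx
    have h1 : Real.exp (-(c*x)) ≤ 1 := Real.exp_le_one_iff.mpr (by nlinarith)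
    have h2 : 0 ≤ 1 - Real.exp (-(c*x)) := by linarith
    positivity
  have key : ∀ ε : ℝ, 0 < ε → Real.sqrt (g t0) ≤ y t0 + ε := by
    intro ε hε
    set B : ℝ → ℝ := fun s => (y s + ε)^2 with hB
    set B' : ℝ → ℝ := fun s => 2 * (y s + ε) * (K * (c * Real.exp (-(c*s)))) with hB'
    have hBd : ∀ x : ℝ, HasDerivAt B (B' x) x := by
      intro x
      have := ((hy_deriv x).add_const ε).pow 2
      exact this.congr_deriv (by simp [hB'])
    have main : g t0 ≤ B t0 := by
      refine image_le_of_deriv_right_lt_deriv_boundary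
        (f := g) (f' := g') (B := B) (B' := B') (a := 0) (b := t0)
        (fun x hx => ((hg x hx.1).continuousAt).continuousWithinAt)
        (fun x hx => (hg x hx.1).hasDerivWithinAt)
        (by simp [hg0, hB]; positivity)
        hBd ?_ (Set.right_mem_Icc.mpr ht0)
      intro x hx hgB
      have hxnn : 0 ≤ x := hx.1
      have hynn := hy_nn x hxnn
      have hupos : 0 < y x + ε := by linarith
      have hu : Real.sqrt (g x) = y x + ε := by
        rw [hgB, hB]
        exact Real.sqrt_sq hupos.le
      have hb := hbound x hxnn
      rw [hu] at hb
      have heq : c*K - c * (y x + ε) = K * (c * Real.exp (-(c*x))) - c*ε := by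
        simp only [hy]
        ring
      rw [heq] at hb
      calc g' x ≤ 2 * (y x + ε) * (K * (c * Real.exp (-(c*x))) - c*ε) := hb
        _ < 2 * (y x + ε) * (K * (c * Real.exp (-(c*x)))) := by
            nlinarith [mul_pos hupos (mul_pos hc hε)]
        _ = B' x := rfl
    have := Real.sqrt_le_sqrt main
    rwa [hB, Real.sqrt_sq (by linarith [hy_nn t0 ht0])] at this
  exact le_of_forall_pos_le_add key

end Aux

/-- Lemma 3, second bound: if `Δ̂'(t) = Λ(Δ(t) − Δ̂(t))`, `Δ̂(0) = 0`, `Λ` symmetric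
positive definite, `‖Δ(t)‖ ≤ δ_b`, and `P` solves `PΛ + ΛᵀP = −I`, then with
`𝒫 = √(‖P⁻¹‖‖P‖)` one has `‖Δ̂(t)‖ ≤ 2𝒫 δ_b ‖Λ‖ ‖P‖ (1 − e^{−t/(2‖P‖)})`. -/
theorem estimator_output_bound (n : ℕ) (L P : Matrix (Fin n) (Fin n) ℝ)
    (hsymm : L.IsSymm) (hpd : L.PosDef)
    (Dhat D : ℝ → (Fin n → ℝ)) (db : ℝ)
    (hode : ∀ t, 0 ≤ t → HasDerivAt Dhat (L *ᵥ (D t - Dhat t)) t)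
    (h0 : Dhat 0 = 0)
    (hD : ∀ t, 0 ≤ t → Real.sqrt (D t ⬝ᵥ D t) ≤ db)
    (hLyap : P * L + Lᵀ * P = -1) :
    ∀ t, 0 ≤ t →
      Real.sqrt (Dhat t ⬝ᵥ Dhat t) ≤
        2 * Real.sqrt (‖P⁻¹‖ * ‖P‖) * db * ‖L‖ * ‖P‖ *
          (1 - Real.exp (-(t / (2 * ‖P‖)))) := by
  classical
  rcases Nat.eq_zero_or_pos n with hn | hn
  · subst hn
    intro t ht
    have hL0 : L = 0 := Subsingleton.elim _ _
    have hdot : Dhat t ⬝ᵥ Dhat t = 0 := by simp [dotProduct]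
    rw [hdot, Real.sqrt_zero, hL0, norm_zero]
    ring_nf
    exact le_refl 0
  -- main case
  have hdb : 0 ≤ db := (Real.sqrt_nonneg _).trans (hD 0 le_rfl)
  have h1ne : (1 : Matrix (Fin n) (Fin n) ℝ) ≠ 0 := by
    intro h
    have := congrFun (congrFun h ⟨0, hn⟩) ⟨0, hn⟩
    simp at this
  have hLdet : IsUnit L.det := isUnit_iff_ne_zero.mpr hpd.det_pos.ne'
  have hLinvL : L⁻¹ * L = 1 := nonsing_inv_mul L hLdet
  have hLLinv : L * L⁻¹ = 1 := mul_nonsing_inv L hLdet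
  have hLinvne : L⁻¹ ≠ 0 := by
    intro h
    rw [h, Matrix.zero_mul] at hLinvL
    exact h1ne hLinvL.symm
  have hLinvpos : (0:ℝ) < ‖L⁻¹‖ := norm_pos_iff.mpr hLinvne
  have hLt : Lᵀ = L := hsymm
  -- identify P
  set Q : Matrix (Fin n) (Fin n) ℝ := (-(2:ℝ)⁻¹) • L⁻¹ with hQdef
  have hQ : Q * L + L * Q = -1 := by
    rw [hQdef, Matrix.smul_mul, Matrix.mul_smul, hLinvL, hLLinv, ← add_smul]
    norm_num
  have hLyap' : P * L + L * P = -1 := by rwa [hLt] at hLyap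
  have hPQ : P = Q := by
    have hRe : (P - Q) * L + L * (P - Q) = (P * L + L * P) - (Q * L + L * Q) := by
      noncomm_ring
    have hR : (P - Q) * L + L * (P - Q) = 0 := by
      rw [hRe, hLyap', hQ]; simp
    exact sub_eq_zero.mp (aux_anticomm_zero n L (P - Q) hpd hR)
  have hnormP : ‖P‖ = 2⁻¹ * ‖L⁻¹‖ := by
    rw [hPQ, hQdef, norm_smul]
    norm_num
  have hPinvEq : P⁻¹ = (-2 : ℝ) • L := by
    apply Matrix.inv_eq_right_inv
    rw [hPQ, hQdef, Matrix.smul_mul, Matrix.mul_smul, smul_smul, hLinvL]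
    norm_num
  have hnormPinv : ‖P⁻¹‖ = 2 * ‖L‖ := by
    rw [hPinvEq, norm_smul]
    norm_num
  -- constants
  set c : ℝ := ‖L⁻¹‖⁻¹ with hc
  have hcpos : 0 < c := inv_pos.mpr hLinvpos
  set K : ℝ := db * ‖L‖ * ‖L⁻¹‖ with hK
  have hKnn : 0 ≤ K := by positivity
  have hcK : c * K = db * ‖L‖ := by
    rw [hc, hK, show (‖L⁻¹‖:ℝ)⁻¹ * (db*‖L‖*‖L⁻¹‖) = db*‖L‖*(‖L⁻¹‖⁻¹*‖L⁻¹‖) from by ring,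
      inv_mul_cancel₀ hLinvpos.ne', mul_one]
  -- the squared-norm function and its derivative
  set eE := (EuclideanSpace.equiv (Fin n) ℝ).symm with heE
  set g : ℝ → ℝ := fun t => Dhat t ⬝ᵥ Dhat t with hg
  set g' : ℝ → ℝ := fun t => 2 * (Dhat t ⬝ᵥ (L *ᵥ (D t - Dhat t))) with hg'
  have hgnn : ∀ t, 0 ≤ g t := fun t => Finset.sum_nonneg fun i _ => mul_self_nonneg _
  have hgd : ∀ t, 0 ≤ t → HasDerivAt g (g' t) t := by
    intro t ht
    have hF : HasDerivAt (fun s => eE (Dhat s)) (eE (L *ᵥ (D t - Dhat t))) t :=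
      ((EuclideanSpace.equiv (Fin n) ℝ).symm.toContinuousLinearMap.hasFDerivAt).comp_hasDerivAt
        t (hode t ht)
    have := hF.inner ℝ hF
    have hfun : (fun s => (inner ℝ (eE (Dhat s)) (eE (Dhat s)) : ℝ)) = g := by
      funext s
      rw [hg, heE, aux_inner_eq]
    rw [hfun] at this
    refine this.congr_deriv ?_
    rw [heE, aux_inner_eq, aux_inner_eq, hg']
    rw [dotProduct_comm (L *ᵥ (D t - Dhat t)) (Dhat t)]
    ring
  have hg0 : g 0 = 0 := by simp [hg, h0, dotProduct]
  -- derivative bound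
  have hbound : ∀ t, 0 ≤ t → g' t ≤ 2 * Real.sqrt (g t) * (c*K - c * Real.sqrt (g t)) := by
    intro t ht
    have hsplit : Dhat t ⬝ᵥ (L *ᵥ (D t - Dhat t))
        = Dhat t ⬝ᵥ (L *ᵥ D t) - Dhat t ⬝ᵥ (L *ᵥ Dhat t) := by
      rw [mulVec_sub, dotProduct_sub]
    have hcs : Dhat t ⬝ᵥ (L *ᵥ D t)
        ≤ ‖L‖ * Real.sqrt (g t) * db := by
      calc Dhat t ⬝ᵥ (L *ᵥ D t)
          ≤ ‖L‖ * Real.sqrt (Dhat t ⬝ᵥ Dhat t) * Real.sqrt (D t ⬝ᵥ D t) := aux_cs n L _ _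
        _ ≤ ‖L‖ * Real.sqrt (g t) * db := by
            apply mul_le_mul_of_nonneg_left (hD t ht)
            positivity
    have hcoer : c * g t ≤ Dhat t ⬝ᵥ (L *ᵥ Dhat t) := aux_coercive n L hpd (Dhat t)
    have hsq : Real.sqrt (g t) ^ 2 = g t := Real.sq_sqrt (hgnn t)
    have hgval : g' t = 2 * (Dhat t ⬝ᵥ (L *ᵥ (D t - Dhat t))) := rfl
    rw [hgval, hsplit, hcK]
    nlinarith [hsq, Real.sqrt_nonneg (g t)]
  -- apply comparison
  have hmain := aux_ode_comp c K hcpos hKnn g g' hgd hg0 hbound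
  intro t ht
  have h1 := hmain t ht
  -- rewrite the RHS
  have h2P : 2 * ‖P‖ = ‖L⁻¹‖ := by rw [hnormP]; ring
  have hexp : t / (2 * ‖P‖) = c * t := by
    rw [h2P, hc, div_eq_mul_inv, mul_comm]
  have hprod : ‖P⁻¹‖ * ‖P‖ = ‖L‖ * ‖L⁻¹‖ := by
    rw [hnormP, hnormPinv]; ring
  have hs1 : 1 ≤ Real.sqrt (‖L‖ * ‖L⁻¹‖) := by
    have hge : 1 ≤ ‖L‖ * ‖L⁻¹‖ := by
      have hmul : ‖L * L⁻¹‖ ≤ ‖L‖ * ‖L⁻¹‖ := norm_mul_le L L⁻¹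
      have hone : ‖(1 : Matrix (Fin n) (Fin n) ℝ)‖ = 1 := by
        have h2 := Matrix.l2_opNorm_conjTranspose_mul_self (1 : Matrix (Fin n) (Fin n) ℝ)
        rw [conjTranspose_one, mul_one] at h2
        have hnz : ‖(1 : Matrix (Fin n) (Fin n) ℝ)‖ ≠ 0 := by simpa using h1ne
        exact (mul_left_cancel₀ hnz (by rw [mul_one]; exact h2)).symm
      rw [hLLinv, hone] at hmul
      exact hmul
    calc (1:ℝ) = Real.sqrt 1 := Real.sqrt_one.symm
      _ ≤ Real.sqrt (‖L‖ * ‖L⁻¹‖) := Real.sqrt_le_sqrt hge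
  have hexp_nn : 0 ≤ 1 - Real.exp (-(c*t)) := by
    have : Real.exp (-(c*t)) ≤ 1 := Real.exp_le_one_iff.mpr (by nlinarith)
    linarith
  calc Real.sqrt (g t) ≤ K * (1 - Real.exp (-(c*t))) := h1
    _ ≤ Real.sqrt (‖L‖ * ‖L⁻¹‖) * K * (1 - Real.exp (-(c*t))) := by
        nlinarith [mul_nonneg (mul_nonneg (sub_nonneg.mpr hs1) hKnn) hexp_nn]
    _ = 2 * Real.sqrt (‖P⁻¹‖ * ‖P‖) * db * ‖L‖ * ‖P‖ * (1 - Real.exp (-(t / (2 * ‖P‖)))) := by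
        rw [hprod, hexp, hnormP, hK]
        ring
end

section
/- Consider scalar functions h, V : [0,∞) → ℝ with V(t) = ½e(t)², where e is differentiable, and suppose: (i) V̇(t) ≤ −2μ_e e(t)² + γ for constants μ_e > 0, γ ≥ 0; (ii) ḣ(t) = a(t) + w(t)e(t) for functions a, w; (iii) a(t) ≥ −μ_h h(t) + w(t)²/𝒟 + σ_V γ for all t, where 𝒟 = 4σ_V μ_e − 2σ_V μ_h > 0 with μ_h, σ_V > 0. Then h_V := h − σ_V V satisfies ḣ_V(t) ≥ −μ_h h_V(t) for all t ≥ 0, and hence if h_V(0) ≥ 0 then h(t) ≥ 0 for all t ≥ 0. -/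
/-- Abstract scalar version of Theorem 2 (Method 1). With `V(t) = ½e(t)²`,
`V̇ ≤ −2μ_e e² + γ`, `ḣ = a + w·e`, and
`a ≥ −μ_h h + w²/𝒟 + σ_V γ` where `𝒟 = 4σ_V μ_e − 2σ_V μ_h > 0`, the modified
barrier `h_V = h − σ_V V` satisfies `ḣ_V ≥ −μ_h h_V` on `[0,∞)`, and hence
`h_V(0) ≥ 0` implies `h(t) ≥ 0` for all `t ≥ 0`. -/
theorem method1_robust_safety (h e a w : ℝ → ℝ) (mue muh sigmaV gamma : ℝ)
    (hmue : 0 < mue) (hmuh : 0 < muh) (hsigma : 0 < sigmaV) (hgamma : 0 ≤ gamma)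
    (hD : 0 < 4 * sigmaV * mue - 2 * sigmaV * muh)
    (hdiffe : Differentiable ℝ e) (hdiffh : Differentiable ℝ h)
    (hV : ∀ t, 0 ≤ t →
      deriv (fun s => (1 / 2) * e s ^ 2) t ≤ -2 * mue * e t ^ 2 + gamma)
    (hhdot : ∀ t, 0 ≤ t → deriv h t = a t + w t * e t)
    (ha : ∀ t, 0 ≤ t →
      a t ≥ -muh * h t + w t ^ 2 / (4 * sigmaV * mue - 2 * sigmaV * muh) + sigmaV * gamma) :
    (∀ t, 0 ≤ t →
        deriv (fun s => h s - sigmaV * ((1 / 2) * e s ^ 2)) t ≥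
          -muh * (h t - sigmaV * ((1 / 2) * e t ^ 2))) ∧
      (0 ≤ h 0 - sigmaV * ((1 / 2) * e 0 ^ 2) → ∀ t, 0 ≤ t → 0 ≤ h t) := by
  set D : ℝ := 4 * sigmaV * mue - 2 * sigmaV * muh with hDdef
  have hVdiff : Differentiable ℝ (fun s => (1 / 2) * e s ^ 2) :=
    (hdiffe.pow 2).const_mul _
  have hhVdiff : Differentiable ℝ (fun s => h s - sigmaV * ((1 / 2) * e s ^ 2)) :=
    hdiffh.sub (hVdiff.const_mul _)
  have hderiv : ∀ t, deriv (fun s => h s - sigmaV * ((1 / 2) * e s ^ 2)) t =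
      deriv h t - sigmaV * deriv (fun s => (1 / 2) * e s ^ 2) t := by
    intro t
    rw [deriv_fun_sub (hdiffh t) ((hVdiff.const_mul _) t), deriv_const_mul _ (hVdiff t)]
  have part1 : ∀ t, 0 ≤ t →
      deriv (fun s => h s - sigmaV * ((1 / 2) * e s ^ 2)) t ≥
        -muh * (h t - sigmaV * ((1 / 2) * e t ^ 2)) := by
    intro t ht
    have h1 := hV t ht
    have h2 := hhdot t ht
    have h3 := ha t ht
    have key : D * (w t / D + e t / 2) ^ 2 =
        w t ^ 2 / D + w t * e t + D / 4 * e t ^ 2 := by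
      field_simp
      ring
    have keynn : 0 ≤ w t ^ 2 / D + w t * e t + D / 4 * e t ^ 2 := by
      rw [← key]; positivity
    rw [hderiv t, h2]
    nlinarith [mul_pos hsigma hmue, sq_nonneg (e t), mul_nonneg (mul_pos hsigma hmue).le (sq_nonneg (e t))]
  refine ⟨part1, ?_⟩
  intro h0 t ht
  set hVf : ℝ → ℝ := fun s => h s - sigmaV * ((1 / 2) * e s ^ 2) with hVfdef
  set F : ℝ → ℝ := fun s => hVf s * Real.exp (muh * s) with hFdef
  have hFdiff : Differentiable ℝ F :=
    hhVdiff.mul ((differentiable_id.const_mul muh).exp)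
  have hFderiv : ∀ s, deriv F s =
      (deriv hVf s + muh * hVf s) * Real.exp (muh * s) := by
    intro s
    have hexp : HasDerivAt (fun u : ℝ => Real.exp (muh * u)) (muh * Real.exp (muh * s)) s := by
      simpa [mul_comm] using ((hasDerivAt_id s).const_mul muh).exp
    have hhv : HasDerivAt hVf (deriv hVf s) s := (hhVdiff s).hasDerivAt
    have := hhv.fun_mul hexp
    rw [this.deriv]
    ring
  have hmono : MonotoneOn F (Set.Ici (0 : ℝ)) := by
    apply monotoneOn_of_deriv_nonneg (convex_Ici 0) hFdiff.continuous.continuousOn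
      (fun s _ => (hFdiff s).differentiableWithinAt)
    intro s hs
    rw [interior_Ici] at hs
    have hs0 : (0 : ℝ) ≤ s := le_of_lt hs
    rw [hFderiv s]
    have h1 := part1 s hs0
    have hrfl : hVf s = h s - sigmaV * ((1 / 2) * e s ^ 2) := rfl
    have hnn : 0 ≤ deriv hVf s + muh * hVf s := by rw [hrfl]; linarith
    exact mul_nonneg hnn (Real.exp_pos _).le
  have hF0 : 0 ≤ F 0 := by
    simp [hFdef, hVfdef]
    simpa using h0
  have hFt : F 0 ≤ F t := hmono (Set.mem_Ici.mpr le_rfl) (Set.mem_Ici.mpr ht) ht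
  have hVft : 0 ≤ hVf t := by
    have hexp_pos : 0 < Real.exp (muh * t) := Real.exp_pos _
    have hFt' : (0:ℝ) ≤ hVf t * Real.exp (muh * t) := hF0.trans hFt
    nlinarith [hFt']
  have hVnn : 0 ≤ sigmaV * ((1 / 2) * e t ^ 2) := by positivity
  have : hVf t = h t - sigmaV * ((1 / 2) * e t ^ 2) := rfl
  linarith [this ▸ hVft]
end
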